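/- Let c = (c1,c2) and c' = (c'1,c'2) ∈ O² be primitive pairs and d, d' ∈ O monic. (i) Suppose a/r lies on L(d·c) and a'/r' lies on L(d'·c'), with max(|d·c1|,|d·c2|)² ≤ |r| and max(|d'·c'1|,|d'·c'2|)² ≤ |r'|, and |a/r − a'/r'| < max(max(|d·c1|,|d·c2|), max(|d'·c'1|,|d'·c'2|))/(|r|·|r'|), where the difference is the coordinatewise maximum of absolute values in F_q(t) ⊂ K_∞. Then a·r' = a'·r (so a/r = a'/r' as points, and hence (a,r) = (a',r')). (ii) Suppose a/r lies on both L(d·c) and L(d'·c'), with max(|d·c1|,|d·c2|)² ≤ |r|, max(|d'·c'1|,|d'·c'2|)² ≤ |r|, and |c1·c'2| < |r|/(|d|·|d'|) and |c2·c'1| < |r|/(|d|·|d'|). Then d·c = d'·c' in O², and consequently d = d' and c = c'. -/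

import Mathlib

set_option autoImplicit false

noncomputable section

open Polynomial Matrix
open scoped Classical

variable {Fq : Type} [Field Fq] [Fintype Fq]

/-- The absolute value on `O = Fq[t]`: `|x| = q ^ deg x` for `x ≠ 0`, and `|0| = 0`. -/
def Oabs (x : Fq[X]) : ℝ := if x = 0 then 0 else (Fintype.card Fq : ℝ) ^ x.natDegree

/-- The maximum norm on pairs of polynomials. -/
def Oabs2 (a : Fq[X] × Fq[X]) : ℝ := max (Oabs a.1) (Oabs a.2)

/-- A pair `c = (c₁, c₂)` is primitive if `gcd(c₁,c₂) = 1` and either `c₁` is monic,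
or `c₁ = 0` and `c₂` is monic. -/
def Primitive (c : Fq[X] × Fq[X]) : Prop :=
  IsCoprime c.1 c.2 ∧ (c.1.Monic ∨ (c.1 = 0 ∧ c.2.Monic))

/-- `gcd(a, b, r) = 1`: every common divisor of `a`, `b` and `r` is a unit. -/
def CoprimeTriple (a b r : Fq[X]) : Prop :=
  ∀ p : Fq[X], p ∣ a → p ∣ b → p ∣ r → IsUnit p

/-- `a/r` lies on the generalised line `L(d·c)`: there is `k` with
`d(c₁a₁ + c₂a₂) = k·r` and `gcd(d,k) = 1`. -/
def OnLine (d : Fq[X]) (c : Fq[X] × Fq[X]) (r : Fq[X]) (a : Fq[X] × Fq[X]) : Prop :=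
  ∃ k : Fq[X], d * (c.1 * a.1 + c.2 * a.2) = k * r ∧ IsCoprime d k

/-- The embedding of `O = Fq[t]` into its fraction field `Fq(t)`. -/
def toR : Fq[X] →+* RatFunc Fq := algebraMap _ _

/-- The absolute value at infinity on `Fq(t)`: `|f| = q^{deg num f - deg denom f}`. -/
def Rabs (f : RatFunc Fq) : ℝ :=
  if f = 0 then 0 else (Fintype.card Fq : ℝ) ^ f.intDegree

lemma one_lt_q : (1:ℝ) < (Fintype.card Fq : ℝ) := by exact_mod_cast Fintype.one_lt_card

lemma q_pos : (0:ℝ) < (Fintype.card Fq : ℝ) := lt_trans one_pos one_lt_q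

lemma Oabs_zero : Oabs (0 : Fq[X]) = 0 := by simp [Oabs]

lemma Oabs_nonneg (x : Fq[X]) : 0 ≤ Oabs x := by
  unfold Oabs; split_ifs
  · exact le_refl 0
  · exact le_of_lt (pow_pos q_pos _)

lemma Oabs_pos {x : Fq[X]} (hx : x ≠ 0) : 0 < Oabs x := by
  unfold Oabs; rw [if_neg hx]; exact pow_pos q_pos _

lemma Oabs_mul (x y : Fq[X]) : Oabs (x * y) = Oabs x * Oabs y := by
  by_cases hx : x = 0
  · simp [hx, Oabs_zero]
  by_cases hy : y = 0
  · simp [hy, Oabs_zero]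
  unfold Oabs
  rw [if_neg (mul_ne_zero hx hy), if_neg hx, if_neg hy, natDegree_mul hx hy, pow_add]

lemma Oabs_neg (x : Fq[X]) : Oabs (-x) = Oabs x := by
  unfold Oabs; rw [natDegree_neg]; simp

lemma Oabs_add_le (x y : Fq[X]) : Oabs (x + y) ≤ max (Oabs x) (Oabs y) := by
  by_cases hxy : x + y = 0
  · rw [hxy, Oabs_zero]; exact le_max_of_le_left (Oabs_nonneg x)
  by_cases hx : x = 0
  · simp [hx]
  by_cases hy : y = 0
  · simp [hy]
  have hd := Polynomial.natDegree_add_le x y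
  rcases le_total x.natDegree y.natDegree with h | h
  · refine le_max_of_le_right ?_
    unfold Oabs; rw [if_neg hxy, if_neg hy]
    exact pow_le_pow_right₀ (le_of_lt one_lt_q) (by omega)
  · refine le_max_of_le_left ?_
    unfold Oabs; rw [if_neg hxy, if_neg hx]
    exact pow_le_pow_right₀ (le_of_lt one_lt_q) (by omega)

lemma Oabs_sub_le (x y : Fq[X]) : Oabs (x - y) ≤ max (Oabs x) (Oabs y) := by
  have := Oabs_add_le x (-y)
  rwa [Oabs_neg, ← sub_eq_add_neg] at this

lemma Oabs_le_of_dvd {x y : Fq[X]} (h : x ∣ y) (hy : y ≠ 0) : Oabs x ≤ Oabs y := by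
  have hx : x ≠ 0 := by rintro rfl; exact hy (zero_dvd_iff.mp h)
  unfold Oabs; rw [if_neg hx, if_neg hy]
  exact pow_le_pow_right₀ (le_of_lt one_lt_q) (Polynomial.natDegree_le_of_dvd h hy)

lemma eq_zero_of_dvd_of_lt {r z : Fq[X]} (h : r ∣ z) (hlt : Oabs z < Oabs r) : z = 0 := by
  by_contra hz
  exact absurd (Oabs_le_of_dvd h hz) (not_le.mpr hlt)

lemma toR_ne {y : Fq[X]} (hy : y ≠ 0) : (toR y : RatFunc Fq) ≠ 0 := by
  unfold toR; exact RatFunc.algebraMap_ne_zero hy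

lemma Rabs_div (x y : Fq[X]) (hy : y ≠ 0) : Rabs (toR x / toR y) = Oabs x / Oabs y := by
  by_cases hx : x = 0
  · unfold toR; rw [hx, map_zero, zero_div]
    rw [Oabs_zero, zero_div]; simp [Rabs]
  · have hfy : (toR y : RatFunc Fq) ≠ 0 := toR_ne hy
    have hf : (toR x / toR y : RatFunc Fq) ≠ 0 := div_ne_zero (toR_ne hx) hfy
    have hdeg : RatFunc.intDegree (toR x / toR y : RatFunc Fq)
        = (x.natDegree : ℤ) - y.natDegree := by
      have h1 := RatFunc.intDegree_mul hf hfy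
      rw [div_mul_cancel₀ _ hfy] at h1
      unfold toR at h1 ⊢
      rw [RatFunc.intDegree_polynomial, RatFunc.intDegree_polynomial] at h1
      omega
    unfold Rabs Oabs
    rw [if_neg hf, if_neg hx, if_neg hy, hdeg, zpow_sub₀ (ne_of_gt q_pos), zpow_natCast,
      zpow_natCast]

lemma dist_eq (x x' r r' : Fq[X]) (hr : r ≠ 0) (hr' : r' ≠ 0) :
    Rabs (toR x / toR r - toR x' / toR r') = Oabs (x * r' - x' * r) / (Oabs r * Oabs r') := by
  have h1 : (toR x / toR r - toR x' / toR r' : RatFunc Fq)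
      = toR (x * r' - x' * r) / toR (r * r') := by
    rw [div_sub_div _ _ (toR_ne hr) (toR_ne hr'), map_sub, _root_.map_mul, _root_.map_mul, _root_.map_mul]
    ring_nf
  rw [h1, Rabs_div _ _ (mul_ne_zero hr hr'), Oabs_mul]

lemma dvd_of_triple {a b r X : Fq[X]} (h : CoprimeTriple a b r)
    (h1 : r ∣ X * a) (h2 : r ∣ X * b) : r ∣ X := by
  have hg : IsCoprime (EuclideanDomain.gcd a b) r := by
    rw [← EuclideanDomain.gcd_isUnit_iff]
    exact h _ ((EuclideanDomain.gcd_dvd_left _ r).trans (EuclideanDomain.gcd_dvd_left a b))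
      ((EuclideanDomain.gcd_dvd_left _ r).trans (EuclideanDomain.gcd_dvd_right a b))
      (EuclideanDomain.gcd_dvd_right _ _)
  have hXg : r ∣ X * EuclideanDomain.gcd a b := by
    rw [EuclideanDomain.gcd_eq_gcd_ab a b]
    have e : X * (a * EuclideanDomain.gcdA a b + b * EuclideanDomain.gcdB a b)
        = (X * a) * EuclideanDomain.gcdA a b + (X * b) * EuclideanDomain.gcdB a b := by ring
    rw [e]
    exact dvd_add (h1.mul_right _) (h2.mul_right _)
  exact hg.symm.dvd_of_dvd_mul_right hXg

lemma prim_C_pos {c : Fq[X] × Fq[X]} (hc : Primitive c) :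
    0 < max (Oabs c.1) (Oabs c.2) := by
  by_cases h1 : c.1 = 0
  · have h2 : c.2 ≠ 0 := by
      rintro h2
      have := hc.1; rw [h1, h2] at this
      exact not_isUnit_zero (isCoprime_zero_left.mp this)
    exact lt_max_of_lt_right (Oabs_pos h2)
  · exact lt_max_of_lt_left (Oabs_pos h1)

lemma max_abs_mul (d : Fq[X]) (c : Fq[X] × Fq[X]) :
    max (Oabs (d * c.1)) (Oabs (d * c.2)) = Oabs d * max (Oabs c.1) (Oabs c.2) := by
  rw [Oabs_mul, Oabs_mul]
  exact (mul_max_of_nonneg _ _ (Oabs_nonneg d)).symm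

lemma aux_i (c : Fq[X] × Fq[X]) (hc : Primitive c) (d : Fq[X]) (hd : d.Monic)
    (r r' : Fq[X]) (hr : r.Monic) (a a' : Fq[X] × Fq[X])
    (hline : OnLine d c r a)
    (hN2 : (max (Oabs (d * c.1)) (Oabs (d * c.2))) ^ 2 ≤ Oabs r)
    (h1 : Oabs (a.1 * r' - a'.1 * r) < max (Oabs (d * c.1)) (Oabs (d * c.2)))
    (h2 : Oabs (a.2 * r' - a'.2 * r) < max (Oabs (d * c.1)) (Oabs (d * c.2))) :
    a.1 * r' = a'.1 * r ∧ a.2 * r' = a'.2 * r := by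
  obtain ⟨k, hk, hdk⟩ := hline
  set δ1 := a.1 * r' - a'.1 * r with hδ1
  set δ2 := a.2 * r' - a'.2 * r with hδ2
  set N := max (Oabs (d * c.1)) (Oabs (d * c.2)) with hN
  set C := max (Oabs c.1) (Oabs c.2) with hC
  have hNC : N = Oabs d * C := max_abs_mul d c
  have hCpos : 0 < C := prim_C_pos hc
  have hdn : d ≠ 0 := hd.ne_zero
  have hNpos : 0 < N := by rw [hNC]; exact mul_pos (Oabs_pos hdn) hCpos
  have hzeq : d * (c.1 * δ1 + c.2 * δ2) = r * (k * r' - d * (c.1 * a'.1 + c.2 * a'.2)) := by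
    rw [hδ1, hδ2]; linear_combination r' * hk
  have hzlt : Oabs (d * (c.1 * δ1 + c.2 * δ2)) < Oabs r := by
    have e : d * (c.1 * δ1 + c.2 * δ2) = (d * c.1) * δ1 + (d * c.2) * δ2 := by ring
    rw [e]
    refine lt_of_le_of_lt (Oabs_add_le _ _) (lt_of_lt_of_le ?_ hN2)
    have b1 : Oabs ((d * c.1) * δ1) < N ^ 2 := by
      rw [Oabs_mul, sq]
      calc Oabs (d * c.1) * Oabs δ1
          ≤ N * Oabs δ1 := mul_le_mul_of_nonneg_right (le_max_left _ _) (Oabs_nonneg _)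
        _ < N * N := mul_lt_mul_of_pos_left h1 hNpos
    have b2 : Oabs ((d * c.2) * δ2) < N ^ 2 := by
      rw [Oabs_mul, sq]
      calc Oabs (d * c.2) * Oabs δ2
          ≤ N * Oabs δ2 := mul_le_mul_of_nonneg_right (le_max_right _ _) (Oabs_nonneg _)
        _ < N * N := mul_lt_mul_of_pos_left h2 hNpos
    exact max_lt b1 b2
  have hz0 : d * (c.1 * δ1 + c.2 * δ2) = 0 := eq_zero_of_dvd_of_lt ⟨_, hzeq⟩ hzlt
  have hcδ : c.1 * δ1 + c.2 * δ2 = 0 := by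
    rcases mul_eq_zero.mp hz0 with h | h
    · exact absurd h hdn
    · exact h
  obtain ⟨s, hs1, hs2⟩ : ∃ s, δ1 = c.2 * s ∧ δ2 = -(c.1 * s) := by
    by_cases hc2 : c.2 = 0
    · have hu : IsUnit c.1 := by
        have := hc.1; rw [hc2] at this; exact isCoprime_zero_right.mp this
      have hm : c.1 = 1 := by
        rcases hc.2 with h | h
        · exact h.eq_one_of_isUnit hu
        · exact absurd (h.1 ▸ hu) not_isUnit_zero
      refine ⟨-δ2, ?_, by rw [hm]; ring⟩
      have hδ10 : δ1 = 0 := by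
        have := hcδ; rw [hc2, hm] at this; simpa using this
      rw [hc2, zero_mul, hδ10]
    · have hdvd : c.2 ∣ δ1 := by
        have hh : c.2 ∣ δ1 * c.1 := ⟨-δ2, by linear_combination hcδ⟩
        exact (hc.1.symm).dvd_of_dvd_mul_right hh
      obtain ⟨s, hs⟩ := hdvd
      refine ⟨s, hs, ?_⟩
      have hz : c.2 * (c.1 * s + δ2) = 0 := by linear_combination hcδ - c.1 * hs
      rcases mul_eq_zero.mp hz with h | h
      · exact absurd h hc2
      · linear_combination h
  have hr0 : r ≠ 0 := hr.ne_zero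
  have hrel : r * (s * k + d * (a.2 * a'.1 - a.1 * a'.2)) = 0 := by
    have hs1' := hs1; have hs2' := hs2
    rw [hδ1] at hs1'; rw [hδ2] at hs2'
    linear_combination (-s) * hk + d * a.1 * hs2' - d * a.2 * hs1'
  have hkey : s * k = -(d * (a.2 * a'.1 - a.1 * a'.2)) := by
    rcases mul_eq_zero.mp hrel with h | h
    · exact absurd h hr0
    · linear_combination h
  have hds : d ∣ s :=
    hdk.dvd_of_dvd_mul_right ⟨-(a.2 * a'.1 - a.1 * a'.2), by linear_combination hkey⟩
  have hs0 : s = 0 := by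
    by_contra hsne
    have hle : Oabs d ≤ Oabs s := Oabs_le_of_dvd hds hsne
    have h1' : Oabs c.2 * Oabs s < N := by rw [← Oabs_mul, ← hs1]; exact h1
    have h2' : Oabs c.1 * Oabs s < N := by
      rw [← Oabs_mul]
      have e : Oabs (c.1 * s) = Oabs δ2 := by rw [hs2, Oabs_neg]
      rw [e]; exact h2
    have hCs : C * Oabs s < N := by
      rw [hC, max_mul_of_nonneg _ _ (Oabs_nonneg s)]
      exact max_lt h2' h1'
    rw [hNC, mul_comm (Oabs d) C] at hCs
    have hlt : Oabs s < Oabs d := lt_of_mul_lt_mul_left hCs (le_of_lt hCpos)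
    linarith
  constructor
  · have : δ1 = 0 := by rw [hs1, hs0, mul_zero]
    rw [hδ1] at this; exact sub_eq_zero.mp this
  · have : δ2 = 0 := by rw [hs2, hs0, mul_zero, neg_zero]
    rw [hδ2] at this; exact sub_eq_zero.mp this

/-- Repulsion of generalised lines:
(i) if `a/r ∈ L(d·c)` and `a'/r' ∈ L(d'·c')` with `|d·c|² ≤ |r|`, `|d'·c'|² ≤ |r'|`
and `|a/r − a'/r'| < max(|d·c|, |d'·c'|)/(|r||r'|)`, then `a/r = a'/r'` and hence
`(a,r) = (a',r')`; (ii) if `a/r` lies on both `L(d·c)` and `L(d'·c')` with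
`|d·c|², |d'·c'|² ≤ |r|`, `|c₁·c'₂| < |r|/(|d||d'|)` and `|c₂·c'₁| < |r|/(|d||d'|)`,
then `d·c = d'·c'`, so `d = d'` and `c = c'`. -/
theorem stmt_17 (Fq : Type) [Field Fq] [Fintype Fq]
    (c c' : Fq[X] × Fq[X]) (hc : Primitive c) (hc' : Primitive c')
    (d d' : Fq[X]) (hd : d.Monic) (hd' : d'.Monic) :
    (∀ r r' : Fq[X], ∀ a a' : Fq[X] × Fq[X],
      r.Monic → r'.Monic →
      Oabs2 a < Oabs r → CoprimeTriple a.1 a.2 r → OnLine d c r a →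
      Oabs2 a' < Oabs r' → CoprimeTriple a'.1 a'.2 r' → OnLine d' c' r' a' →
      (max (Oabs (d * c.1)) (Oabs (d * c.2))) ^ 2 ≤ Oabs r →
      (max (Oabs (d' * c'.1)) (Oabs (d' * c'.2))) ^ 2 ≤ Oabs r' →
      max (Rabs (toR a.1 / toR r - toR a'.1 / toR r'))
          (Rabs (toR a.2 / toR r - toR a'.2 / toR r'))
        < max (max (Oabs (d * c.1)) (Oabs (d * c.2)))
              (max (Oabs (d' * c'.1)) (Oabs (d' * c'.2))) / (Oabs r * Oabs r') →
      a.1 * r' = a'.1 * r ∧ a.2 * r' = a'.2 * r ∧ a = a' ∧ r = r') ∧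
    (∀ r : Fq[X], ∀ a : Fq[X] × Fq[X],
      r.Monic → Oabs2 a < Oabs r → CoprimeTriple a.1 a.2 r →
      OnLine d c r a → OnLine d' c' r a →
      (max (Oabs (d * c.1)) (Oabs (d * c.2))) ^ 2 ≤ Oabs r →
      (max (Oabs (d' * c'.1)) (Oabs (d' * c'.2))) ^ 2 ≤ Oabs r →
      Oabs (c.1 * c'.2) < Oabs r / (Oabs d * Oabs d') →
      Oabs (c.2 * c'.1) < Oabs r / (Oabs d * Oabs d') →
      d * c.1 = d' * c'.1 ∧ d * c.2 = d' * c'.2 ∧ d = d' ∧ c = c') := by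
  constructor
  · -- part (i)
    intro r r' a a' hr hr' _ htri hOn _ htri' hOn' hN2 hN'2 hdist
    have hr0 : r ≠ 0 := hr.ne_zero
    have hr'0 : r' ≠ 0 := hr'.ne_zero
    have hrpos : 0 < Oabs r * Oabs r' := mul_pos (Oabs_pos hr0) (Oabs_pos hr'0)
    set N := max (Oabs (d * c.1)) (Oabs (d * c.2)) with hN
    set N' := max (Oabs (d' * c'.1)) (Oabs (d' * c'.2)) with hN'
    have hb1 : Oabs (a.1 * r' - a'.1 * r) < max N N' := by
      have h := lt_of_le_of_lt (le_max_left _ _) hdist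
      rw [dist_eq a.1 a'.1 r r' hr0 hr'0] at h
      exact (div_lt_div_iff_of_pos_right hrpos).mp h
    have hb2 : Oabs (a.2 * r' - a'.2 * r) < max N N' := by
      have h := lt_of_le_of_lt (le_max_right _ _) hdist
      rw [dist_eq a.2 a'.2 r r' hr0 hr'0] at h
      exact (div_lt_div_iff_of_pos_right hrpos).mp h
    have key : a.1 * r' = a'.1 * r ∧ a.2 * r' = a'.2 * r := by
      rcases le_total N' N with hle | hle
      · rw [max_eq_left hle] at hb1 hb2
        exact aux_i c hc d hd r r' hr a a' hOn hN2 hb1 hb2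
      · rw [max_eq_right hle] at hb1 hb2
        have hb1' : Oabs (a'.1 * r - a.1 * r') < N' := by
          rw [← Oabs_neg, neg_sub]; exact hb1
        have hb2' : Oabs (a'.2 * r - a.2 * r') < N' := by
          rw [← Oabs_neg, neg_sub]; exact hb2
        obtain ⟨e1, e2⟩ := aux_i c' hc' d' hd' r' r hr' a' a hOn' hN'2 hb1' hb2'
        exact ⟨e1.symm, e2.symm⟩
    obtain ⟨e1, e2⟩ := key
    have hrr' : r ∣ r' :=
      dvd_of_triple htri ⟨a'.1, by linear_combination e1⟩ ⟨a'.2, by linear_combination e2⟩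
    have hr'r : r' ∣ r :=
      dvd_of_triple htri' ⟨a.1, by linear_combination -e1⟩ ⟨a.2, by linear_combination -e2⟩
    have hreq : r = r' := eq_of_monic_of_associated hr hr' (associated_of_dvd_dvd hrr' hr'r)
    have ha1 : a.1 = a'.1 := by
      apply mul_right_cancel₀ hr0
      rw [← hreq] at e1; exact e1
    have ha2 : a.2 = a'.2 := by
      apply mul_right_cancel₀ hr0
      rw [← hreq] at e2; exact e2
    exact ⟨e1, e2, Prod.ext ha1 ha2, hreq⟩
  · -- part (ii)
    intro r a hr _ htri hOn hOn' _ _ hcc1 hcc2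
    obtain ⟨k, hk, hdk⟩ := hOn
    obtain ⟨k', hk', hdk'⟩ := hOn'
    have hr0 : r ≠ 0 := hr.ne_zero
    have hdn : d ≠ 0 := hd.ne_zero
    have hd'n : d' ≠ 0 := hd'.ne_zero
    have hP : 0 < Oabs d * Oabs d' := mul_pos (Oabs_pos hdn) (Oabs_pos hd'n)
    set X := d * d' * (c.1 * c'.2 - c.2 * c'.1) with hXdef
    have hX1 : X * a.1 = r * (d' * c'.2 * k - d * c.2 * k') := by
      rw [hXdef]; linear_combination (d' * c'.2) * hk - (d * c.2) * hk'
    have hX2 : X * a.2 = r * (d * c.1 * k' - d' * c'.1 * k) := by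
      rw [hXdef]; linear_combination (d * c.1) * hk' - (d' * c'.1) * hk
    have hrX : r ∣ X := dvd_of_triple htri ⟨_, hX1⟩ ⟨_, hX2⟩
    have hXlt : Oabs X < Oabs r := by
      have e : X = d * d' * (c.1 * c'.2) - d * d' * (c.2 * c'.1) := by rw [hXdef]; ring
      rw [e]
      refine lt_of_le_of_lt (Oabs_sub_le _ _) (max_lt ?_ ?_)
      · rw [Oabs_mul, Oabs_mul]
        calc Oabs d * Oabs d' * Oabs (c.1 * c'.2)
            < Oabs d * Oabs d' * (Oabs r / (Oabs d * Oabs d')) :=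
              mul_lt_mul_of_pos_left hcc1 hP
          _ = Oabs r := by rw [mul_div_assoc']; exact mul_div_cancel_left₀ _ hP.ne'
      · rw [Oabs_mul, Oabs_mul]
        calc Oabs d * Oabs d' * Oabs (c.2 * c'.1)
            < Oabs d * Oabs d' * (Oabs r / (Oabs d * Oabs d')) :=
              mul_lt_mul_of_pos_left hcc2 hP
          _ = Oabs r := by rw [mul_div_assoc']; exact mul_div_cancel_left₀ _ hP.ne'
    have hX0 : X = 0 := eq_zero_of_dvd_of_lt hrX hXlt
    have hD : c.1 * c'.2 = c.2 * c'.1 := by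
      rw [hXdef] at hX0
      rcases mul_eq_zero.mp hX0 with h | h
      · exact absurd h (mul_ne_zero hdn hd'n)
      · exact sub_eq_zero.mp h
    have hceq : c = c' := by
      rcases hc.2 with hm | ⟨h10, h2m⟩
      · rcases hc'.2 with hm' | ⟨h10', h2m'⟩
        · have hdv1 : c.1 ∣ c'.1 :=
            (hc.1).dvd_of_dvd_mul_left ⟨c'.2, hD.symm⟩
          have hdv2 : c'.1 ∣ c.1 :=
            (hc'.1).dvd_of_dvd_mul_left ⟨c.2, by linear_combination hD⟩
          have e1 : c.1 = c'.1 :=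
            eq_of_monic_of_associated hm hm' (associated_of_dvd_dvd hdv1 hdv2)
          have e2 : c.2 = c'.2 := by
            apply mul_left_cancel₀ hm.ne_zero
            rw [← e1] at hD; linear_combination -hD
          exact Prod.ext e1 e2
        · have hu' : c'.2 = 1 := by
            have := hc'.1; rw [h10'] at this
            exact h2m'.eq_one_of_isUnit (isCoprime_zero_left.mp this)
          exfalso
          apply hm.ne_zero
          have : c.1 * c'.2 = 0 := by rw [hD, h10', mul_zero]
          rwa [hu', mul_one] at this
      · have hu : c.2 = 1 := by
          have := hc.1; rw [h10] at this
          exact h2m.eq_one_of_isUnit (isCoprime_zero_left.mp this)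
        have h10c' : c'.1 = 0 := by
          have : c.2 * c'.1 = 0 := by rw [← hD, h10, zero_mul]
          rwa [hu, one_mul] at this
        rcases hc'.2 with hm' | ⟨h10', h2m'⟩
        · exact absurd h10c' hm'.ne_zero
        · have hu' : c'.2 = 1 := by
            have := hc'.1; rw [h10'] at this
            exact h2m'.eq_one_of_isUnit (isCoprime_zero_left.mp this)
          exact Prod.ext (by rw [h10, h10c']) (by rw [hu, hu'])
    have hdeq : d = d' := by
      rw [← hceq] at hk'
      have h6 : d * k' = d' * k := by
        apply mul_right_cancel₀ hr0
        rw [mul_assoc, mul_assoc, ← hk, ← hk']; ring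
      have hdd' : d ∣ d' := hdk.dvd_of_dvd_mul_right ⟨k', h6.symm⟩
      have hd'd : d' ∣ d := hdk'.dvd_of_dvd_mul_right ⟨k, h6⟩
      exact eq_of_monic_of_associated hd hd' (associated_of_dvd_dvd hdd' hd'd)
    exact ⟨by rw [hceq, hdeq], by rw [hceq, hdeq], hdeq, hceq⟩
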